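/- The implementation relation between algorithms is transitive through glueing: if an algorithm B is obtained as the glueing of an algorithm A along a map φ from the labels of A to algorithms, and a program P implements B (i.e., P is the glueing of B along some map ψ from the labels of B to programs), then P implements A (i.e., P is the glueing of A along some map from the labels of A to programs). -/
import Mathlib


universe u

/-- A labelled graph with control states: a directed graph with edges labelled in `L`
and distinguished initial and terminal vertices.  Syntactic algorithms and programs
are both of this shape. -/
structure LGraph (L : Type u) : Type (u + 1) where
  V : Type u
  E : Type u
  src : E → V
  tgt : E → V
  lab : E → L
  init : V
  term : V

namespace LGraph

variable {L L' L'' : Type u}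

/-- The identifications performed by the glueing: for each edge `e` of `A`, the
initial (resp. terminal) vertex of the copy of `φ (lab e)` attached to `e` is
identified with the source (resp. target) of `e`. -/
def glueRel (A : LGraph L) (φ : L → LGraph L') :
    (A.V ⊕ Σ e : A.E, (φ (A.lab e)).V) → (A.V ⊕ Σ e : A.E, (φ (A.lab e)).V) → Prop :=
  fun w w' =>
    match w, w' with
    | Sum.inl v, Sum.inr ⟨e, u⟩ =>
        (A.src e = v ∧ u = (φ (A.lab e)).init) ∨ (A.tgt e = v ∧ u = (φ (A.lab e)).term)
    | _, _ => False

/-- The glueing of the family `φ` along `A`: each edge `e` of `A` is replaced by a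
disjoint copy of `φ (lab e)`, identifying for each vertex `v` of `A` the initial
vertices of the copies attached to edges with source `v` and the terminal vertices
of the copies attached to edges with target `v`. -/
def glue (A : LGraph L) (φ : L → LGraph L') : LGraph L' where
  V := Quot (glueRel A φ)
  E := Σ e : A.E, (φ (A.lab e)).E
  src f := Quot.mk _ (Sum.inr ⟨f.1, (φ (A.lab f.1)).src f.2⟩)
  tgt f := Quot.mk _ (Sum.inr ⟨f.1, (φ (A.lab f.1)).tgt f.2⟩)
  lab f := (φ (A.lab f.1)).lab f.2
  init := Quot.mk _ (Sum.inl A.init)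
  term := Quot.mk _ (Sum.inl A.term)

/-- Isomorphism of labelled graphs with control states. -/
structure Iso (G H : LGraph L) : Type u where
  vEquiv : G.V ≃ H.V
  eEquiv : G.E ≃ H.E
  src_eq : ∀ e, H.src (eEquiv e) = vEquiv (G.src e)
  tgt_eq : ∀ e, H.tgt (eEquiv e) = vEquiv (G.tgt e)
  lab_eq : ∀ e, H.lab (eEquiv e) = G.lab e
  init_eq : vEquiv G.init = H.init
  term_eq : vEquiv G.term = H.term

/-- A program `P` implements the algorithm `A` when `P` is (isomorphic to) the
glueing of some family of programs along `A`. -/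
def Implements (P : LGraph L'') (A : LGraph L) : Prop :=
  ∃ ψ : L → LGraph L'', Nonempty (Iso P (A.glue ψ))

-- auxiliary
def Iso.trans {G H K : LGraph L} (i : Iso G H) (j : Iso H K) : Iso G K where
  vEquiv := i.vEquiv.trans j.vEquiv
  eEquiv := i.eEquiv.trans j.eEquiv
  src_eq e := by simp [j.src_eq, i.src_eq]
  tgt_eq e := by simp [j.tgt_eq, i.tgt_eq]
  lab_eq e := by simp [j.lab_eq, i.lab_eq]
  init_eq := by simp [i.init_eq, j.init_eq]
  term_eq := by simp [i.term_eq, j.term_eq]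

section Assoc

theorem mk_inr_congr {A : LGraph L} {χ : L → LGraph L'} (e : A.E)
    {x y : (χ (A.lab e)).V} (h : x = y) :
    Quot.mk (glueRel A χ) (Sum.inr ⟨e, x⟩) = Quot.mk (glueRel A χ) (Sum.inr ⟨e, y⟩) := by
  rw [h]

variable (A : LGraph L) (φ : L → LGraph L') (ψ : L' → LGraph L'')

/-- forward on inner quotient -/
def fwdAux : (A.glue φ).V → (A.glue (fun l => (φ l).glue ψ)).V :=
  Quot.lift
    (fun w => match w with
      | Sum.inl v => Quot.mk _ (Sum.inl v)
      | Sum.inr ⟨e, u⟩ => Quot.mk _ (Sum.inr ⟨e, Quot.mk _ (Sum.inl u)⟩))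
    (by
      rintro (v | ⟨e, u⟩) (v' | ⟨e', u'⟩) h <;> simp [glueRel] at h
      rcases h with ⟨rfl, rfl⟩ | ⟨rfl, rfl⟩
      · show Quot.mk (glueRel A fun l => (φ l).glue ψ) (Sum.inl (A.src e'))
            = Quot.mk (glueRel A fun l => (φ l).glue ψ)
                (Sum.inr ⟨e', Quot.mk _ (Sum.inl (φ (A.lab e')).init)⟩)
        exact Quot.sound (Or.inl ⟨rfl, rfl⟩)
      · show Quot.mk (glueRel A fun l => (φ l).glue ψ) (Sum.inl (A.tgt e'))
            = Quot.mk (glueRel A fun l => (φ l).glue ψ)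
                (Sum.inr ⟨e', Quot.mk _ (Sum.inl (φ (A.lab e')).term)⟩)
        exact Quot.sound (Or.inr ⟨rfl, rfl⟩))

def fwdV : ((A.glue φ).glue ψ).V → (A.glue (fun l => (φ l).glue ψ)).V :=
  Quot.lift
    (fun w => match w with
      | Sum.inl q => fwdAux A φ ψ q
      | Sum.inr ⟨⟨e, f⟩, w⟩ => Quot.mk _ (Sum.inr ⟨e, Quot.mk _ (Sum.inr ⟨f, w⟩)⟩))
    (by
      rintro (q | ⟨⟨e, f⟩, w⟩) (q' | ⟨⟨e', f'⟩, w'⟩) h <;> simp [glueRel] at h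
      rcases h with ⟨rfl, rfl⟩ | ⟨rfl, rfl⟩ <;> simp only [fwdAux]
      · exact mk_inr_congr e' (Quot.sound (Or.inl ⟨rfl, rfl⟩))
      · exact mk_inr_congr e' (Quot.sound (Or.inr ⟨rfl, rfl⟩)))

def bwdAux (e : A.E) : ((φ (A.lab e)).glue ψ).V → ((A.glue φ).glue ψ).V :=
  Quot.lift
    (fun w => match w with
      | Sum.inl u => Quot.mk _ (Sum.inl (Quot.mk _ (Sum.inr ⟨e, u⟩)))
      | Sum.inr ⟨f, w⟩ => Quot.mk _ (Sum.inr ⟨⟨e, f⟩, w⟩))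
    (by
      rintro (u | ⟨f, w⟩) (u' | ⟨f', w'⟩) h <;> simp [glueRel] at h
      rcases h with ⟨rfl, rfl⟩ | ⟨rfl, rfl⟩
      · exact Quot.sound (Or.inl ⟨rfl, rfl⟩)
      · exact Quot.sound (Or.inr ⟨rfl, rfl⟩))

def bwdV : (A.glue (fun l => (φ l).glue ψ)).V → ((A.glue φ).glue ψ).V :=
  Quot.lift
    (fun w => match w with
      | Sum.inl v => Quot.mk _ (Sum.inl (Quot.mk _ (Sum.inl v)))
      | Sum.inr ⟨e, q⟩ => bwdAux A φ ψ e q)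
    (by
      rintro (v | ⟨e, q⟩) (v' | ⟨e', q'⟩) h <;> simp [glueRel] at h
      rcases h with ⟨rfl, rfl⟩ | ⟨rfl, rfl⟩ <;> simp only [bwdAux]
      · exact congrArg (Quot.mk (glueRel (A.glue φ) ψ) ∘ Sum.inl)
          (Quot.sound (Or.inl ⟨rfl, rfl⟩) :
            Quot.mk (glueRel A φ) (Sum.inl (A.src e')) = Quot.mk _ (Sum.inr ⟨e', (φ (A.lab e')).init⟩))
      · exact congrArg (Quot.mk (glueRel (A.glue φ) ψ) ∘ Sum.inl)
          (Quot.sound (Or.inr ⟨rfl, rfl⟩) :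
            Quot.mk (glueRel A φ) (Sum.inl (A.tgt e')) = Quot.mk _ (Sum.inr ⟨e', (φ (A.lab e')).term⟩)))

def glueAssoc : Iso ((A.glue φ).glue ψ) (A.glue (fun l => (φ l).glue ψ)) where
  vEquiv :=
    { toFun := fwdV A φ ψ
      invFun := bwdV A φ ψ
      left_inv := by
        intro x
        induction x using Quot.ind with
        | _ w =>
        rcases w with q | ⟨⟨e, f⟩, w⟩
        · induction q using Quot.ind with
          | _ w => rcases w with v | ⟨e, u⟩ <;> rfl
        · rfl
      right_inv := by
        intro x
        induction x using Quot.ind with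
        | _ w =>
        rcases w with v | ⟨e, q⟩
        · rfl
        · induction q using Quot.ind with
          | _ w => rcases w with u | ⟨f, w⟩ <;> rfl }
  eEquiv :=
    { toFun := fun g => ⟨g.1.1, g.1.2, g.2⟩
      invFun := fun g => ⟨⟨g.1, g.2.1⟩, g.2.2⟩
      left_inv := by rintro ⟨⟨e, f⟩, g⟩; rfl
      right_inv := by rintro ⟨e, f, g⟩; rfl }
  src_eq := by rintro ⟨⟨e, f⟩, g⟩; rfl
  tgt_eq := by rintro ⟨⟨e, f⟩, g⟩; rfl
  lab_eq := by rintro ⟨⟨e, f⟩, g⟩; rfl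
  init_eq := rfl
  term_eq := rfl

end Assoc

/-- Transitivity of implementation through glueing: if the algorithm `B` is obtained
by glueing the algorithms `φ` along `A`, and the program `P` implements `B` (i.e.
`P` is the glueing of `B` along some family `ψ` of programs), then `P` implements
`A` (i.e. `P` is the glueing of `A` along some family of programs) — because
glueing composes: `glue (glue A φ) ψ ≅ glue A (fun l => glue (φ l) ψ)`. -/
theorem implements_of_glue (A : LGraph L) (φ : L → LGraph L') (P : LGraph L'')
    (h : Implements P (A.glue φ)) : Implements P A := by
  obtain ⟨ψ, ⟨i⟩⟩ := h
  exact ⟨fun l => (φ l).glue ψ, ⟨i.trans (glueAssoc A φ ψ)⟩⟩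

end LGraph
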